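/- Equivalence of the thinning-based and classical Poisson INGARCH(1,1) models: let τ > 0, κ > 0, 0 ≤ β < 1, η > 0 and X_0 ∈ ℕ be fixed. Define the thinning-based process {X_t}_{t≥0} by: E_0 ~ Poisson(η); recursively, given the past, L_t = β ∘ E_t (binomial thinning), A_t = E_t − L_t, C_t = κ ⋆ X_t (Poisson thinning), E_{t+1} = L_t + C_t, and X_{t+1} = I_{t+1} + A_{t+1}, where the I_t are i.i.d. Poisson(τ) and all thinnings and draws are conditionally independent given the past. Define the classical process {X'_t}_{t≥0} by: X'_0 = X_0, λ_0 = τ + (1 − β)η, and for t ≥ 1, X'_t given (X'_{t−1}, …, X'_0) is Poisson(λ_t) with λ_t = ν + α X'_{t−1} + β λ_{t−1}, where ν = (1 − β)τ and α = (1 − β)κ. Then the two processes have the same distribution: the law of (X_t)_{t≥0} on ℕ^ℕ equals the law of (X'_t)_{t≥0}. -/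

import Mathlib

open ProbabilityTheory
open Real
open scoped NNReal ENNReal

/-- Binomial thinning `β ∘ n`: the distribution of the number of successes among `n`
independent Bernoulli(β) trials, as a `PMF` on `ℕ`. -/
noncomputable def binThin (b : ℝ≥0∞) (hb : b ≤ 1) (n : ℕ) : PMF ℕ :=
  (PMF.binomial b.toNNReal (by exact_mod_cast ENNReal.coe_toNNReal_le_self.trans hb) n).map Fin.val

lemma binThin_apply (b : ℝ≥0∞) (hb : b ≤ 1) (n k : ℕ) :
    binThin b hb n k = if k ≤ n then b ^ k * (1 - b) ^ (n - k) * (n.choose k) else 0 := by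
  rw [binThin, PMF.map_apply]
  split_ifs with h
  · rw [tsum_eq_single (⟨k, Nat.lt_succ_of_le h⟩ : Fin (n+1))]
    · simp [PMF.binomial_apply, ENNReal.coe_toNNReal (ne_top_of_le_ne_top ENNReal.one_ne_top hb)]
    · intro i hi
      simp only [ne_eq] at hi
      rw [if_neg]
      intro hk
      exact hi (Fin.ext hk.symm)
  · apply ENNReal.tsum_eq_zero.mpr
    intro i
    rw [if_neg]
    intro hk
    exact h (hk ▸ Fin.is_le i)

lemma poissonPMF_apply (r : ℝ≥0) (n : ℕ) :
    poissonPMF r n = ENNReal.ofReal (Real.exp (-r) * (r:ℝ) ^ n / n.factorial) := rfl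

-- real convolution identity
lemma poisson_real_conv (a c : ℝ≥0) (n : ℕ) :
    ∑ m ∈ Finset.range (n+1),
      (Real.exp (-a) * (a:ℝ)^m / m.factorial) * (Real.exp (-c) * (c:ℝ)^(n-m) / (n-m).factorial)
      = Real.exp (-((a:ℝ)+c)) * ((a:ℝ)+c)^n / n.factorial := by
  rw [add_pow, neg_add, Real.exp_add]
  simp only [Finset.mul_sum, Finset.sum_div]
  apply Finset.sum_congr rfl
  intro m hm
  rw [Finset.mem_range, Nat.lt_succ_iff] at hm
  have h := Nat.choose_mul_factorial_mul_factorial hm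
  have h1 : (m.factorial : ℝ) ≠ 0 := Nat.cast_ne_zero.mpr m.factorial_ne_zero
  have h2 : ((n-m).factorial : ℝ) ≠ 0 := Nat.cast_ne_zero.mpr (n-m).factorial_ne_zero
  have h3 : (n.factorial : ℝ) ≠ 0 := Nat.cast_ne_zero.mpr n.factorial_ne_zero
  have h' : (n.choose m : ℝ) * m.factorial * (n-m).factorial = n.factorial := by
    exact_mod_cast congrArg (Nat.cast : ℕ → ℝ) h
  field_simp
  linear_combination -((a:ℝ)^m * (c:ℝ)^(n-m)) * h'

lemma poisson_add_map (a c : ℝ≥0) :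
    ((poissonPMF a).bind fun m => (poissonPMF c).map fun x => m + x) = poissonPMF (a + c) := by
  ext n
  rw [PMF.bind_apply]
  have hmap : ∀ m, ((poissonPMF c).map fun x => m + x) n
      = if m ≤ n then poissonPMF c (n - m) else 0 := by
    intro m
    rw [PMF.map_apply]
    split_ifs with h
    · rw [tsum_eq_single (n - m)]
      · rw [if_pos (by omega)]
      · intro x hx; rw [if_neg (by omega)]
    · apply ENNReal.tsum_eq_zero.mpr
      intro x; rw [if_neg (by omega)]
  simp only [hmap]
  rw [tsum_eq_sum (s := Finset.range (n+1)) (by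
    intro m hm
    rw [Finset.mem_range, Nat.lt_succ_iff] at hm
    rw [if_neg hm, mul_zero])]
  have : ∀ m ∈ Finset.range (n+1),
      poissonPMF a m * (if m ≤ n then poissonPMF c (n - m) else 0)
      = ENNReal.ofReal ((Real.exp (-a) * (a:ℝ)^m / m.factorial)
          * (Real.exp (-c) * (c:ℝ)^(n-m) / (n-m).factorial)) := by
    intro m hm
    rw [Finset.mem_range, Nat.lt_succ_iff] at hm
    rw [if_pos hm, poissonPMF_apply, poissonPMF_apply,
      ← ENNReal.ofReal_mul (by positivity)]
  rw [Finset.sum_congr rfl this, ← ENNReal.ofReal_sum_of_nonneg (by intros; positivity),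
    poisson_real_conv, poissonPMF_apply]
  push_cast
  ring_nf

lemma poisson_real_split (μ β : ℝ≥0) (hβ : β ≤ 1) (l a : ℕ) :
    (Real.exp (-μ) * (μ:ℝ)^(l+a) / (l+a).factorial)
      * ((β:ℝ)^l * ((1-β : ℝ≥0):ℝ)^a * ((l+a).choose l))
    = (Real.exp (-((β*μ : ℝ≥0):ℝ)) * ((β*μ : ℝ≥0):ℝ)^l / l.factorial)
      * (Real.exp (-(((1-β)*μ : ℝ≥0):ℝ)) * (((1-β)*μ : ℝ≥0):ℝ)^a / a.factorial) := by
  have hc : ((1-β:ℝ≥0):ℝ) = 1 - (β:ℝ) := by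
    rw [NNReal.coe_sub hβ, NNReal.coe_one]
  push_cast [hc]
  have hexp : Real.exp (-(μ:ℝ)) = Real.exp (-((β:ℝ)*μ)) * Real.exp (-((1-(β:ℝ))*μ)) := by
    rw [← Real.exp_add]; ring_nf
  rw [hexp, mul_pow ((β:ℝ)) (μ:ℝ), mul_pow (1-(β:ℝ)) (μ:ℝ), pow_add (μ:ℝ)]
  have hch : (((l+a).choose l : ℕ) : ℝ) * l.factorial * a.factorial = (l+a).factorial := by
    have := Nat.choose_mul_factorial_mul_factorial (Nat.le_add_right l a)
    rw [Nat.add_sub_cancel_left] at this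
    exact_mod_cast congrArg (Nat.cast : ℕ → ℝ) this
  have h1 : (l.factorial : ℝ) ≠ 0 := Nat.cast_ne_zero.mpr l.factorial_ne_zero
  have h2 : (a.factorial : ℝ) ≠ 0 := Nat.cast_ne_zero.mpr a.factorial_ne_zero
  have h3 : ((l+a).factorial : ℝ) ≠ 0 := Nat.cast_ne_zero.mpr (l+a).factorial_ne_zero
  field_simp
  linear_combination ((β:ℝ)^l * (1-(β:ℝ))^a * (μ:ℝ)^(l+a)) * hch

lemma poisson_split (μ β : ℝ≥0) (hb : (β : ℝ≥0∞) ≤ 1) :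
    ((poissonPMF μ).bind fun e => (binThin (β : ℝ≥0∞) hb e).map fun l => (l, e - l))
    = (poissonPMF (β * μ)).bind fun l => (poissonPMF ((1 - β) * μ)).map fun a => (l, a) := by
  have hβ : β ≤ 1 := by exact_mod_cast hb
  ext ⟨l, a⟩
  rw [PMF.bind_apply, PMF.bind_apply]
  have hL : ∀ e, ((binThin (β : ℝ≥0∞) hb e).map fun l' => (l', e - l')) (l, a)
      = if e = l + a then binThin (β : ℝ≥0∞) hb e l else 0 := by
    intro e
    rw [PMF.map_apply]
    rw [tsum_eq_single l (by intro l' hl'; rw [if_neg]; simp [Prod.ext_iff]; tauto)]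
    by_cases he : e = l + a
    · rw [if_pos he, if_pos (by simp [he, Prod.ext_iff])]
    · rw [if_neg he]
      by_cases hle : l ≤ e
      · rw [if_neg (by simp [Prod.ext_iff]; omega)]
      · rw [binThin_apply, if_neg hle, ite_self]
  simp only [hL]
  rw [tsum_eq_single (l + a) (by intro e he; rw [if_neg he, mul_zero])]
  have hR : ∀ l', ((poissonPMF ((1 - β) * μ)).map fun a' => (l', a')) (l, a)
      = if l' = l then poissonPMF ((1 - β) * μ) a else 0 := by
    intro l'
    rw [PMF.map_apply]
    rw [tsum_eq_single a (by intro a' ha'; rw [if_neg]; simp [Prod.ext_iff]; tauto)]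
    by_cases h : l' = l
    · rw [if_pos (by simp [h]), if_pos h]
    · rw [if_neg (by simp [Prod.ext_iff]; tauto), if_neg h]
  simp only [hR]
  rw [tsum_eq_single l (by intro l' hl'; rw [if_neg hl', mul_zero]), if_pos rfl, if_true]
  rw [binThin_apply, if_pos (Nat.le_add_right l a), Nat.add_sub_cancel_left]
  have hcoe : (1 : ℝ≥0∞) - (β : ℝ≥0∞) = ((1 - β : ℝ≥0) : ℝ≥0∞) := by
    rw [ENNReal.coe_sub, ENNReal.coe_one]
  rw [hcoe, poissonPMF_apply, poissonPMF_apply, poissonPMF_apply]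
  rw [show ((β : ℝ≥0∞))^l * (((1 - β : ℝ≥0) : ℝ≥0∞))^a * (((l+a).choose l : ℕ) : ℝ≥0∞)
      = ENNReal.ofReal ((β:ℝ)^l * ((1-β:ℝ≥0):ℝ)^a * (((l+a).choose l : ℕ):ℝ)) by
    rw [ENNReal.ofReal_mul (by positivity), ENNReal.ofReal_mul (by positivity)]
    simp [ENNReal.ofReal_pow, ENNReal.ofReal_coe_nnreal, ENNReal.ofReal_natCast]]
  rw [← ENNReal.ofReal_mul (by positivity), ← ENNReal.ofReal_mul (by positivity)]
  congr 1
  exact poisson_real_split μ β hβ l a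

/-- One step of the thinning-based Poisson INGARCH(1,1) process, as a Markov kernel on the
state `(Xₜ, Lₜ)`: draw `Cₜ = κ ⋆ Xₜ` (Poisson thinning, i.e. `Cₜ | Xₜ ~ Pois(κ·Xₜ)`), set
`Eₜ₊₁ = Lₜ + Cₜ`, draw `Lₜ₊₁ = β ∘ Eₜ₊₁`, set `Aₜ₊₁ = Eₜ₊₁ - Lₜ₊₁`, draw `Iₜ₊₁ ~ Pois(τ)`
and set `Xₜ₊₁ = Iₜ₊₁ + Aₜ₊₁`. -/
noncomputable def thinStep (τ κ : ℝ≥0) (b : ℝ≥0∞) (hb : b ≤ 1) (s : ℕ × ℕ) :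
    PMF (ℕ × ℕ) :=
  (poissonPMF (κ * s.1)).bind fun c =>
    (binThin b hb (s.2 + c)).bind fun l' =>
      (poissonPMF τ).map fun i' => (i' + ((s.2 + c) - l'), l')

/-- Initialization of the thinning-based process: `X₀` fixed, `E₀ ~ Pois(η)`, `L₀ = β ∘ E₀`. -/
noncomputable def thinInit (η : ℝ≥0) (b : ℝ≥0∞) (hb : b ≤ 1) (x0 : ℕ) : PMF (ℕ × ℕ) :=
  (poissonPMF η).bind fun e => (binThin b hb e).map fun l => (x0, l)

/-- Law of the trajectory `(X₀, …, Xₙ)` (together with the current state) of the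
thinning-based Poisson INGARCH(1,1) process. -/
noncomputable def thinPath (τ κ η : ℝ≥0) (b : ℝ≥0∞) (hb : b ≤ 1) (x0 : ℕ) :
    ℕ → PMF (List ℕ × (ℕ × ℕ))
  | 0 => (thinInit η b hb x0).map fun s => ([s.1], s)
  | n + 1 => (thinPath τ κ η b hb x0 n).bind fun h =>
      (thinStep τ κ b hb h.2).map fun s' => (h.1 ++ [s'.1], s')

/-- One step of the classical Poisson INGARCH(1,1) process, as a Markov kernel on the state
`(X'ₜ, λₜ)`: set `λₜ₊₁ = ν + α·X'ₜ + β·λₜ` and draw `X'ₜ₊₁ ~ Pois(λₜ₊₁)`. -/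
noncomputable def classicalStep (ν α β : ℝ≥0) (s : ℕ × ℝ≥0) : PMF (ℕ × ℝ≥0) :=
  (poissonPMF (ν + α * s.1 + β * s.2)).map fun x' => (x', ν + α * s.1 + β * s.2)

/-- Law of the trajectory `(X'₀, …, X'ₙ)` (together with the current state) of the classical
Poisson INGARCH(1,1) process started at `X'₀ = x0`, `λ₀ = lam0`. -/
noncomputable def classicalPath (ν α β : ℝ≥0) (x0 : ℕ) (lam0 : ℝ≥0) :
    ℕ → PMF (List ℕ × (ℕ × ℝ≥0))
  | 0 => PMF.pure ([x0], (x0, lam0))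
  | n + 1 => (classicalPath ν α β x0 lam0 n).bind fun h =>
      (classicalStep ν α β h.2).map fun s' => (h.1 ++ [s'.1], s')


lemma poisson_add_bind {α : Type*} (a c : ℝ≥0) (f : ℕ → PMF α) :
    ((poissonPMF a).bind fun m => (poissonPMF c).bind fun x => f (m + x))
    = (poissonPMF (a + c)).bind f := by
  rw [← poisson_add_map a c, PMF.bind_bind]
  simp only [PMF.bind_map, Function.comp_def]

lemma poisson_split_bind {α : Type*} (μ β : ℝ≥0) (hb : (β : ℝ≥0∞) ≤ 1)
    (f : ℕ → ℕ → PMF α) :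
    ((poissonPMF μ).bind fun e => (binThin (β : ℝ≥0∞) hb e).bind fun l => f l (e - l))
    = (poissonPMF (β * μ)).bind fun l => (poissonPMF ((1 - β) * μ)).bind fun a => f l a := by
  have h := congrArg (fun p : PMF (ℕ × ℕ) => p.bind (fun q : ℕ × ℕ => f q.1 q.2))
    (poisson_split μ β hb)
  simpa only [PMF.bind_bind, PMF.bind_map, Function.comp_def, PMF.pure_bind,
    ← PMF.bind_pure_comp] using h

/-- Auxiliary process tracking `(Xₜ, μₜ)` where `μₜ` is the conditional rate of `Eₜ`. -/
noncomputable def auxStep (τ κ β : ℝ≥0) (s : ℕ × ℝ≥0) : PMF (ℕ × ℝ≥0) :=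
  (poissonPMF (τ + (1 - β) * (β * s.2 + κ * s.1))).map fun x' => (x', β * s.2 + κ * s.1)

noncomputable def auxPath (τ κ η β : ℝ≥0) (x0 : ℕ) : ℕ → PMF (List ℕ × (ℕ × ℝ≥0))
  | 0 => PMF.pure ([x0], (x0, η))
  | n + 1 => (auxPath τ κ η β x0 n).bind fun h =>
      (auxStep τ κ β h.2).map fun s' => (h.1 ++ [s'.1], s')

lemma step_bridge (τ κ β : ℝ≥0) (hb : (β : ℝ≥0∞) ≤ 1) (x : ℕ) (μ : ℝ≥0) (hist : List ℕ) :
    ((poissonPMF (β * μ)).bind fun l => (thinStep τ κ (β : ℝ≥0∞) hb (x, l)).map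
        fun s' => (hist ++ [s'.1], s'))
    = (auxStep τ κ β (x, μ)).bind fun s' =>
        (poissonPMF (β * s'.2)).map fun l => (hist ++ [s'.1], (s'.1, l)) := by
  simp only [thinStep, auxStep, ← PMF.bind_pure_comp, PMF.bind_bind, Function.comp_def, PMF.pure_bind]
  refine Eq.trans (poisson_add_bind (β * μ) (κ * (x : ℝ≥0))
    (fun e => (binThin (β : ℝ≥0∞) hb e).bind fun l' => (poissonPMF τ).bind fun i =>
      PMF.pure (hist ++ [i + (e - l')], (i + (e - l'), l')))) ?_
  refine Eq.trans (poisson_split_bind (β * μ + κ * (x : ℝ≥0)) β hb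
    (fun l' a => (poissonPMF τ).bind fun i =>
      PMF.pure (hist ++ [i + a], (i + a, l')))) ?_
  refine Eq.trans (congrArg _ (funext fun l' => ?_))
    (PMF.bind_comm (poissonPMF (β * (β * μ + κ * (x : ℝ≥0))))
      (poissonPMF (τ + (1 - β) * (β * μ + κ * (x : ℝ≥0))))
      (fun l' n => PMF.pure (hist ++ [n], (n, l'))))
  rw [PMF.bind_comm]
  exact poisson_add_bind τ ((1 - β) * (β * μ + κ * (x : ℝ≥0)))
    (fun n => PMF.pure (hist ++ [n], (n, l')))

lemma thin_eq_aux (τ κ η β : ℝ≥0) (hb : (β : ℝ≥0∞) ≤ 1) (x0 : ℕ) (n : ℕ) :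
    thinPath τ κ η (β : ℝ≥0∞) hb x0 n
    = (auxPath τ κ η β x0 n).bind fun h =>
        (poissonPMF (β * h.2.2)).map fun l => (h.1, (h.2.1, l)) := by
  induction n with
  | zero =>
    simp only [thinPath, thinInit, auxPath, ← PMF.bind_pure_comp,
      PMF.bind_bind, Function.comp_def, PMF.pure_bind]
    refine Eq.trans (poisson_split_bind η β hb
      (fun l a => PMF.pure ([x0], (x0, l)))) ?_
    exact congrArg _ (funext fun l => PMF.bind_const _ _)
  | succ n ih =>
    simp only [thinPath, auxPath, ih, ← PMF.bind_pure_comp, PMF.bind_bind,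
      Function.comp_def, PMF.pure_bind]
    refine congrArg _ (funext fun h => ?_)
    have := step_bridge τ κ β hb h.2.1 h.2.2 h.1
    simpa only [← PMF.bind_pure_comp, PMF.bind_bind, Function.comp_def, PMF.pure_bind] using this

lemma classical_eq_aux (τ κ η β : ℝ≥0) (hβ : β ≤ 1) (x0 : ℕ) (n : ℕ) :
    classicalPath ((1 - β) * τ) ((1 - β) * κ) β x0 (τ + (1 - β) * η) n
    = (auxPath τ κ η β x0 n).map fun h => (h.1, (h.2.1, τ + (1 - β) * h.2.2)) := by
  have hrate : ∀ (x : ℕ) (μ : ℝ≥0),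
      (1 - β) * τ + (1 - β) * κ * (x : ℝ≥0) + β * (τ + (1 - β) * μ)
      = τ + (1 - β) * (β * μ + κ * (x : ℝ≥0)) := by
    intro x μ
    apply NNReal.coe_injective
    push_cast [NNReal.coe_sub hβ]
    ring
  induction n with
  | zero =>
    simp only [classicalPath, auxPath, PMF.pure_map]
  | succ n ih =>
    simp only [classicalPath, auxPath, ih, classicalStep, auxStep,
      ← PMF.bind_pure_comp, PMF.bind_bind, Function.comp_def, PMF.pure_bind]
    refine congrArg _ (funext fun h => ?_)
    simp only [hrate h.2.1 h.2.2]

/-- Equivalence of the thinning-based and classical Poisson INGARCH(1,1) models: with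
`ν = (1-β)τ`, `α = (1-β)κ` and `λ₀ = τ + (1-β)η`, the laws of the trajectories
`(X₀, …, Xₙ)` of the two processes coincide for every `n`, i.e. the two processes have the
same distribution. -/
theorem ingarch11_thinning_equivalence
    (τ κ η β : ℝ≥0) (hτ : 0 < τ) (hκ : 0 < κ) (hη : 0 < η) (hβ : β < 1) (x0 : ℕ) :
    ∀ n : ℕ,
      (thinPath τ κ η (β : ℝ≥0∞) (by exact_mod_cast hβ.le) x0 n).map Prod.fst =
      (classicalPath ((1 - β) * τ) ((1 - β) * κ) β x0 (τ + (1 - β) * η) n).map Prod.fst := by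
  intro n
  rw [thin_eq_aux τ κ η β (by exact_mod_cast hβ.le) x0 n,
    classical_eq_aux τ κ η β hβ.le x0 n]
  simp only [← PMF.bind_pure_comp, PMF.bind_bind, Function.comp_def, PMF.pure_bind]
  refine congrArg _ (funext fun h => ?_)
  exact PMF.bind_const _ _
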